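/- Let G be a graph with vertex partition (A, B, Z) satisfying the Basic and Extended Conditions of a crucial partition, with P the associated P3-packing on B. Let B* be the set of free vertices in good 3-paths of P_L and A* the set of A_0-vertices adjacent to 3-paths in P^1. Then A' = (A ∪ B*) \ A* induces a subgraph of maximum degree at most 1. -/
import Mathlib


open Finset

variable {V : Type*}

/-- vertex set of an (ordered) 3-path -/
def TripSet [DecidableEq V] (t : V × V × V) : Finset V := {t.1, t.2.1, t.2.2}

/-- a P3-packing: a collection of vertex-disjoint paths on three vertices -/
def IsP3Packing [DecidableEq V] (G : SimpleGraph V) (P : Finset (V × V × V)) : Prop :=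
  (∀ t ∈ P, G.Adj t.1 t.2.1 ∧ G.Adj t.2.1 t.2.2 ∧ t.1 ≠ t.2.2) ∧
  (∀ t ∈ P, ∀ s ∈ P, t ≠ s → Disjoint (TripSet t) (TripSet s))

/-- `D` is a 3-path vertex cover of the induced subgraph `G[S]` -/
def IsP3VCOn (G : SimpleGraph V) (S D : Finset V) : Prop :=
  ∀ a b c : V, a ∈ S → b ∈ S → c ∈ S → G.Adj a b → G.Adj b c → a ≠ c →
    a ∈ D ∨ b ∈ D ∨ c ∈ D

section Crucial

variable [Fintype V] [DecidableEq V] (G : SimpleGraph V) [DecidableRel G.Adj]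
  (A : Finset V) (P : Finset (V × V × V))

/-- `w` is adjacent to the 3-path `L` -/
def AdjTo (w : V) (L : V × V × V) : Prop := ∃ x ∈ TripSet L, G.Adj w x

instance (w : V) (L : V × V × V) : Decidable (AdjTo G w L) := by
  unfold AdjTo; infer_instance

/-- `A₀`: the degree-0 vertices of `G[A]` -/
def A0set : Finset V := A.filter (fun a => ∀ b ∈ A, ¬ G.Adj a b)

/-- `A(L)`: the `A`-vertices in components of `G[A]` adjacent to `L` -/
def ALset (L : V × V × V) : Finset V :=
  A.filter (fun a => AdjTo G a L ∨ ∃ b ∈ A, G.Adj a b ∧ AdjTo G b L)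

/-- the number of vertices of `L` adjacent to some `A`-vertex -/
def nAdjVerts (L : V × V × V) : ℕ :=
  ((TripSet L).filter (fun x => ∃ a ∈ A, G.Adj x a)).card

/-- `P¹`: 3-paths `L` of `P` with `|A(L)| = 1` -/
def P1sup : Finset (V × V × V) := P.filter (fun L => (ALset G A L).card = 1)

/-- `P₀`: 3-paths of `P` with no vertex adjacent to `A` -/
def P0set : Finset (V × V × V) := P.filter (fun L => nAdjVerts G A L = 0)

/-- `P_M`: 3-paths of `P₁ \ P¹` whose middle vertex is adjacent to `A` -/
def PMset : Finset (V × V × V) :=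
  P.filter (fun L => (ALset G A L).card ≠ 1 ∧ nAdjVerts G A L = 1 ∧
    ∃ a ∈ A, G.Adj L.2.1 a)

/-- `P_L`: 3-paths of `P₁ \ P¹` with `|A(L)| ≥ 2` and an ending vertex
adjacent to `A` -/
def PLset : Finset (V × V × V) :=
  P.filter (fun L => 2 ≤ (ALset G A L).card ∧ nAdjVerts G A L = 1 ∧
    ((∃ a ∈ A, G.Adj L.1 a) ∨ (∃ a ∈ A, G.Adj L.2.2 a)))

/-- `x` is a free vertex of the 3-path `L` -/
def Free (x : V) (L : V × V × V) : Prop :=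
  x ∈ TripSet L ∧ ∀ a ∈ A, ¬ G.Adj x a

instance (x : V) (L : V × V × V) : Decidable (Free G A x L) := by
  unfold Free; infer_instance

/-- bad 3-paths of `P₀`: at least two vertices adjacent to free vertices of
3-paths of `P_L` -/
def badP0set : Finset (V × V × V) :=
  (P0set G A P).filter (fun L0 =>
    2 ≤ ((TripSet L0).filter (fun y =>
      ∃ L ∈ PLset G A P, ∃ x, Free G A x L ∧ G.Adj y x)).card)

/-- good 3-paths of `P_L`: not adjacent to a bad 3-path of `P₀` -/
def goodPLset : Finset (V × V × V) :=
  (PLset G A P).filter (fun L =>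
    ¬ ∃ L0 ∈ badP0set G A P, ∃ y ∈ TripSet L0, ∃ x ∈ TripSet L, G.Adj y x)

/-- `B*`: the free vertices in good 3-paths of `P_L` -/
def Bstar : Finset V :=
  Finset.univ.filter (fun x => ∃ L ∈ goodPLset G A P, Free G A x L)

/-- `A*`: the `A₀`-vertices adjacent to 3-paths of `P¹` -/
def Astar : Finset V :=
  (A0set G A).filter (fun a => ∃ L ∈ P1sup G A P, AdjTo G a L)

end Crucial

/-- for a crucial partition `(A, B, Z)` with packing `P`, the set
`A' = (A ∪ B*) \ A*` induces a subgraph of maximum degree at most 1. -/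
theorem stmt15 [Fintype V] [DecidableEq V] (G : SimpleGraph V) [DecidableRel G.Adj]
    (A B Z : Finset V) (P : Finset (V × V × V))
    (hunion : A ∪ B ∪ Z = Finset.univ)
    (hAB : Disjoint A B) (hAZ : Disjoint A Z) (hBZ : Disjoint B Z)
    -- (B1): `G[A]` has maximum degree at most 1
    (hB1 : ∀ a ∈ A, (A.filter (fun b => G.Adj a b)).card ≤ 1)
    -- (B2): `B` is the vertex set of the P3-packing `P`
    (hB2 : IsP3Packing G P ∧ B = P.biUnion TripSet)
    -- (B3): no vertex of `A` is adjacent to a vertex of `Z`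
    (hB3 : ∀ a ∈ A, ∀ z ∈ Z, ¬ G.Adj a z)
    -- (B4): `|Z| ≤ 5·γ(G[Z])`
    (hB4 : ∀ D : Finset V, D ⊆ Z → IsP3VCOn G Z D → Z.card ≤ 5 * D.card)
    -- (E1): each 3-path of `P \ P¹` has at most one vertex adjacent to `A`
    (hE1 : ∀ L ∈ P, (ALset G A L).card ≠ 1 → nAdjVerts G A L ≤ 1)
    -- (E2): no 3-path of `P_M` is adjacent to both `A₀`- and `A₁`-vertices
    (hE2 : ∀ L ∈ PMset G A P,
      ¬ ((∃ a ∈ A0set G A, AdjTo G a L) ∧ (∃ a ∈ A \ A0set G A, AdjTo G a L)))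
    -- (E3): free vertices of distinct 3-paths of `P_L` are nonadjacent
    (hE3 : ∀ L ∈ PLset G A P, ∀ L' ∈ PLset G A P, L ≠ L' →
      ∀ x, Free G A x L → ∀ y, Free G A y L' → ¬ G.Adj x y)
    -- (E4): no free vertex of a `P_L`-path is adjacent to a free vertex of a `P_M`-path
    (hE4 : ∀ L ∈ PLset G A P, ∀ L' ∈ PMset G A P,
      ∀ x, Free G A x L → ∀ y, Free G A y L' → ¬ G.Adj x y)
    -- (E5): each 3-path of `P¹` has at most one vertex adjacent to a free vertex of a `P_L`-path
    (hE5 : ∀ L ∈ P1sup G A P,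
      ((TripSet L).filter (fun y =>
        ∃ L' ∈ PLset G A P, ∃ x, Free G A x L' ∧ G.Adj y x)).card ≤ 1)
    -- (E6): each bad 3-path of `P₀` sees free vertices of only one `P_L`-path
    (hE6 : ∀ L0 ∈ badP0set G A P, ∀ L ∈ PLset G A P, ∀ L' ∈ PLset G A P,
      (∃ y ∈ TripSet L0, ∃ x, Free G A x L ∧ G.Adj y x) →
      (∃ y ∈ TripSet L0, ∃ x, Free G A x L' ∧ G.Adj y x) → L = L')
    -- (E7): no free vertex of a `P_L`-path is adjacent to a vertex of `Z`
    (hE7 : ∀ L ∈ PLset G A P, ∀ x, Free G A x L → ∀ z ∈ Z, ¬ G.Adj x z) :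
    ∀ x ∈ (A ∪ Bstar G A P) \ Astar G A P,
      (((A ∪ Bstar G A P) \ Astar G A P).filter (fun y => G.Adj x y)).card ≤ 1 := by
  intro x hx
  rw [Finset.mem_sdiff] at hx
  obtain ⟨hx1, -⟩ := hx
  rcases Finset.mem_union.1 hx1 with hxA | hxB
  · -- x ∈ A : neighbors in A' lie in A, use hB1
    calc (((A ∪ Bstar G A P) \ Astar G A P).filter (fun y => G.Adj x y)).card
        ≤ (A.filter (fun y => G.Adj x y)).card := by
          apply Finset.card_le_card
          intro y hy
          simp only [Finset.mem_filter, Finset.mem_sdiff, Finset.mem_union] at hy ⊢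
          obtain ⟨⟨hy1, -⟩, hadj⟩ := hy
          rcases hy1 with h | h
          · exact ⟨h, hadj⟩
          · exfalso
            simp only [Bstar, Finset.mem_filter] at h
            obtain ⟨-, L, -, hfree⟩ := h
            exact hfree.2 x hxA hadj.symm
      _ ≤ 1 := hB1 x hxA
  · -- x ∈ B* : x is a free vertex of a good P_L path L
    simp only [Bstar, Finset.mem_filter] at hxB
    obtain ⟨-, L, hLgood, hxfree⟩ := hxB
    have hLPL : L ∈ PLset G A P := Finset.mem_of_mem_filter L hLgood
    have hLP : L ∈ P := Finset.mem_of_mem_filter L hLPL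
    have hcard3 : (TripSet L).card = 3 := by
      obtain ⟨h12, h23, h13⟩ := hB2.1.1 L hLP
      have e1 := h12.ne
      have e2 := h23.ne
      simp [TripSet, Finset.card_insert_of_notMem, Finset.mem_insert,
        Finset.mem_singleton, e1, e2, h13]
    have hn1 : ((TripSet L).filter (fun y => ∃ a ∈ A, G.Adj y a)).card = 1 :=
      (Finset.mem_filter.1 hLPL).2.2.1
    have hfreecard : ((TripSet L).filter (fun y => ¬ ∃ a ∈ A, G.Adj y a)).card = 2 := by
      have h := Finset.card_filter_add_card_filter_not
        (s := TripSet L) (p := fun y => ∃ a ∈ A, G.Adj y a)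
      omega
    have hsub : (((A ∪ Bstar G A P) \ Astar G A P).filter (fun y => G.Adj x y)) ⊆
        ((TripSet L).filter (fun y => ¬ ∃ a ∈ A, G.Adj y a)).erase x := by
      intro y hy
      simp only [Finset.mem_filter, Finset.mem_sdiff, Finset.mem_union] at hy
      obtain ⟨⟨hy1, -⟩, hadj⟩ := hy
      have hyA : y ∉ A := fun h => hxfree.2 y h hadj
      rcases hy1 with h | h
      · exact absurd h hyA
      · simp only [Bstar, Finset.mem_filter] at h
        obtain ⟨-, L', hL'good, hyfree⟩ := h
        have hL'PL : L' ∈ PLset G A P := Finset.mem_of_mem_filter L' hL'good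
        have hLL : L = L' := by
          by_contra hne
          exact hE3 L hLPL L' hL'PL hne x hxfree y hyfree hadj
        rw [Finset.mem_erase]
        refine ⟨(G.ne_of_adj hadj).symm, Finset.mem_filter.2 ⟨hLL ▸ hyfree.1, ?_⟩⟩
        rintro ⟨a, ha, hya⟩
        exact hyfree.2 a ha hya
    have hxmem : x ∈ (TripSet L).filter (fun y => ¬ ∃ a ∈ A, G.Adj y a) :=
      Finset.mem_filter.2 ⟨hxfree.1, fun ⟨a, ha, hxa⟩ => hxfree.2 a ha hxa⟩
    have := Finset.card_le_card hsub
    rw [Finset.card_erase_of_mem hxmem] at this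
    omega
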